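/- Let A be a real symmetric 3×3 matrix with A11 > 0 and det A > 0, and let t ≠ 0. Then the 4×4 matrix D_t (with rows (0, A11·cosh t·sinh t, A12·cosh t·sinh t, A13·cosh t·sinh t), (1, 1, 0, 0), (0, A13·sinh t, cosh t + A23·sinh t, A33·sinh t), (0, -A12·sinh t, -A22·sinh t, cosh t - A23·sinh t)) is invertible. -/

import Mathlib

open Real Matrix

noncomputable def Dmat (A : Matrix (Fin 3) (Fin 3) ℝ) (t : ℝ) : Matrix (Fin 4) (Fin 4) ℝ :=
  !![0, A 0 0 * Real.cosh t * Real.sinh t, A 0 1 * Real.cosh t * Real.sinh t, A 0 2 * Real.cosh t * Real.sinh t;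
     1, 1, 0, 0;
     0, A 0 2 * Real.sinh t, Real.cosh t + A 1 2 * Real.sinh t, A 2 2 * Real.sinh t;
     0, -(A 0 1) * Real.sinh t, -(A 1 1) * Real.sinh t, Real.cosh t - A 1 2 * Real.sinh t]

def Omat : Matrix (Fin 4) (Fin 4) ℝ := !![0,-1,0,0; 1,0,0,0; 0,0,0,-1; 0,0,1,0]

def Gmat : Matrix (Fin 4) (Fin 4) ℝ := !![-1,0,0,0; 0,1,0,0; 0,0,1,0; 0,0,0,1]

theorem stmt_1 (A : Matrix (Fin 3) (Fin 3) ℝ) (hA : A.IsSymm)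
    (h11 : 0 < A 0 0) (hdet : 0 < A.det) (t : ℝ) (ht : t ≠ 0) :
    IsUnit (Dmat A t) := by
  rw [Matrix.isUnit_iff_isUnit_det, isUnit_iff_ne_zero]
  have h10 : A 1 0 = A 0 1 := hA.apply 0 1
  have h20 : A 2 0 = A 0 2 := hA.apply 0 2
  have h21 : A 2 1 = A 1 2 := hA.apply 1 2
  have hs : Real.sinh t ≠ 0 := by
    simpa [Real.sinh_eq_zero] using ht
  have hc : 0 < Real.cosh t := Real.cosh_pos t
  have hkey : (Dmat A t).det =
      -(Real.cosh t * Real.sinh t *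
        ((Real.cosh t) ^ 2 * A 0 0 + (Real.sinh t) ^ 2 * A.det)) := by
    simp [Dmat, Matrix.det_succ_row_zero, Fin.sum_univ_succ, Matrix.det_fin_three,
      h10, h20, h21, Fin.succAbove,
      (show (Fin.castSucc 2 : Fin 4) = 2 from rfl)]
    ring
  rw [hkey]
  have hpos : 0 < (Real.cosh t) ^ 2 * A 0 0 + (Real.sinh t) ^ 2 * A.det := by
    have h1 : 0 < (Real.cosh t) ^ 2 * A 0 0 := by positivity
    have h2 : 0 < (Real.sinh t) ^ 2 * A.det := by positivity
    linarith
  intro h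
  rcases mul_eq_zero.mp (neg_eq_zero.mp h) with h' | h'
  · rcases mul_eq_zero.mp h' with h'' | h''
    · exact (ne_of_gt hc) h''
    · exact hs h''
  · exact (ne_of_gt hpos) h'
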